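/- Let d ≥ 0, r ≥ s ≥ 1 and m = r + s − 2p with s ≤ p ≤ r (so that the q-string S(a+m,s) is contained in S(a,r)). Then there is no k ≥ 2 together with positive integers r_1, …, r_k satisfying r_1 = s and r_k = r (or r_1 = r and r_k = s) and integers p_1, …, p_{k−1} with −d ≤ p_j < min(r_j, r_{j+1}) for all j, such that Σ_{j=1}^{k−1} (r_j + r_{j+1} − 2 p_j) equals −m (respectively, equals m). -/

import Mathlib

lemma stmt10_aux (r' p' : ℕ → ℤ) :
    ∀ n : ℕ, (∀ j, 1 ≤ j → j ≤ n → |r' j - r' (j + 1)| + 2 ≤ r' j + r' (j + 1) - 2 * p' j) →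
      |r' 1 - r' (n + 1)| + 2 * n ≤ ∑ j ∈ Finset.Icc 1 n, (r' j + r' (j + 1) - 2 * p' j) := by
  intro n
  induction n with
  | zero => simp
  | succ n ih =>
    intro H
    rw [Finset.sum_Icc_succ_top (by omega : 1 ≤ n + 1)]
    have h1 := ih (fun j hj hj' => H j hj (by omega))
    have h2 := H (n + 1) (by omega) le_rfl
    have h3 : |r' 1 - r' (n + 1 + 1)| ≤ |r' 1 - r' (n + 1)| + |r' (n + 1) - r' (n + 1 + 1)| :=
      abs_sub_le _ _ _
    push_cast
    linarith

/-- dividing q-factors are not joined by a directed path. -/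
theorem stmt10 (d : ℤ) (hd : 0 ≤ d) (r s m p : ℤ) (hs : 1 ≤ s) (hsr : s ≤ r)
    (hm : m = r + s - 2 * p) (hps : s ≤ p) (hpr : p ≤ r) :
    ¬ ∃ (k : ℕ) (r' p' : ℕ → ℤ), 2 ≤ k ∧
      (∀ j, 1 ≤ j → j ≤ k → 0 < r' j) ∧
      (∀ j, 1 ≤ j → j ≤ k - 1 → -d ≤ p' j ∧ p' j < min (r' j) (r' (j + 1))) ∧
      ((r' 1 = s ∧ r' k = r ∧
          (∑ j ∈ Finset.Icc 1 (k - 1), (r' j + r' (j + 1) - 2 * p' j)) = -m) ∨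
        (r' 1 = r ∧ r' k = s ∧
          (∑ j ∈ Finset.Icc 1 (k - 1), (r' j + r' (j + 1) - 2 * p' j)) = m)) := by
  rintro ⟨k, r', p', hk, hr, hp, hcase⟩
  obtain ⟨n, rfl⟩ : ∃ n, k = n + 1 := ⟨k - 1, by omega⟩
  have hn : 1 ≤ n := by omega
  have H : ∀ j, 1 ≤ j → j ≤ n → |r' j - r' (j + 1)| + 2 ≤ r' j + r' (j + 1) - 2 * p' j := by
    intro j hj hj'
    have h2 := (hp j hj (by omega)).2
    have hpa : p' j < r' j := lt_of_lt_of_le h2 (min_le_left _ _)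
    have hpb : p' j < r' (j + 1) := lt_of_lt_of_le h2 (min_le_right _ _)
    rcases abs_cases (r' j - r' (j + 1)) with ⟨h, _⟩ | ⟨h, _⟩ <;> rw [h] <;> linarith
  have key := stmt10_aux r' p' n H
  simp only [Nat.add_sub_cancel] at hcase
  have hn2 : (2 : ℤ) ≤ 2 * n := by
    have : (1 : ℤ) ≤ (n : ℤ) := by exact_mod_cast hn
    linarith
  rcases hcase with ⟨h1, h2, h3⟩ | ⟨h1, h2, h3⟩ <;>
    rw [h1, h2] at key <;> rw [h3] at key
  · have : -(s - r) ≤ |s - r| := neg_le_abs _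
    linarith
  · have : r - s ≤ |r - s| := le_abs_self _
    linarith
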